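/- Let x_1,...,x_r be elements of the Jacobson radical of a Noetherian ring R and M a finitely generated R-module. Suppose the limit closure of {x_1,...,x_r} in M equals (x_1,...,x_r)M. Then x_r is a nonzerodivisor on M/(x_1,...,x_{r-1})M. -/
import Mathlib

/-- The limit closure of the sequence `xs = x₁, …, x_r` in the `R`-module `M`. -/
noncomputable def limitClosure {R : Type*} [CommRing R] (M : Type*) [AddCommGroup M]
    [Module R M] (xs : List R) : Submodule R M :=
  ⨆ n : ℕ, Submodule.comap (LinearMap.lsmul R M (xs.prod ^ n))
    (Ideal.span ((· ^ (n + 1)) '' {x | x ∈ xs}) • (⊤ : Submodule R M))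

/-- Let `x₁, …, x_r` (given as `ys ++ [x]`) be elements of the Jacobson
radical of a Noetherian ring `R` and `M` a finitely generated `R`-module. If the limit closure
of `{x₁,…,x_r}` in `M` equals `(x₁,…,x_r)M`, then `x_r` is a nonzerodivisor on
`M/(x₁,…,x_{r-1})M`. -/
theorem isSMulRegular_last_of_limitClosure_eq {R : Type*} [CommRing R] [IsNoetherianRing R]
    {M : Type*} [AddCommGroup M] [Module R M] [Module.Finite R M]
    (ys : List R) (x : R) (hjac : ∀ y ∈ ys ++ [x], y ∈ Ideal.jacobson (⊥ : Ideal R))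
    (h : limitClosure M (ys ++ [x]) =
      Ideal.span {z | z ∈ ys ++ [x]} • (⊤ : Submodule R M)) :
    IsSMulRegular (M ⧸ (Ideal.span {y | y ∈ ys} • (⊤ : Submodule R M))) x := by
  classical
  set I : Ideal R := Ideal.span {y | y ∈ ys} with hIdef
  set N : Submodule R M := I • ⊤ with hNdef
  -- the "x-saturation" of N
  set F : ℕ → Submodule R M := fun n => Submodule.comap (LinearMap.lsmul R M (x ^ n)) N
    with hFdef
  have hFmono : Monotone F := by
    intro a b hab m hm
    have : x ^ b • m = x ^ (b - a) • (x ^ a • m) := by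
      rw [smul_smul, ← pow_add, Nat.sub_add_cancel hab]
    show x ^ b • m ∈ N
    rw [this]
    exact N.smul_mem _ hm
  set L : Submodule R M := ⨆ n, F n with hLdef
  have hmemL : ∀ m : M, m ∈ L ↔ ∃ n, x ^ n • m ∈ N := by
    intro m
    rw [hLdef, Submodule.mem_iSup_of_directed _ hFmono.directed_le]
    rfl
  -- the key multiplication fact: ys.prod ^ n * i lands in the ideal of (n+1)-st powers
  have key : ∀ n : ℕ, ∀ i ∈ I, List.prod ys ^ n * i ∈
      Ideal.span ((· ^ (n + 1)) '' {z : R | z ∈ ys ++ [x]}) := by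
    intro n i hi
    induction hi using Submodule.span_induction with
    | mem y hy =>
      obtain ⟨c, hc⟩ := List.dvd_prod (hy : y ∈ ys)
      have hyc : List.prod ys ^ n * y = y ^ (n + 1) * c ^ n := by rw [hc]; ring
      rw [hyc]
      exact Ideal.mul_mem_right _ _
        (Ideal.subset_span ⟨y, List.mem_append.mpr (Or.inl hy), rfl⟩)
    | zero => simp
    | add a b _ _ ha hb => rw [mul_add]; exact add_mem ha hb
    | smul r a _ ha =>
      rw [smul_eq_mul, mul_comm r a, ← mul_assoc]
      exact Ideal.mul_mem_right _ _ ha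
  -- every element of L lies in the limit closure
  have hLlim : L ≤ limitClosure M (ys ++ [x]) := by
    intro m hm
    obtain ⟨n, hn⟩ := (hmemL m).mp hm
    refine Submodule.mem_iSup_of_mem (ι := ℕ) n ?_
    rw [Submodule.mem_comap, LinearMap.lsmul_apply, List.prod_append,
      List.prod_singleton, mul_pow, mul_smul]
    refine Submodule.smul_induction_on hn ?_ ?_
    · intro r hr w _
      rw [smul_smul]
      exact Submodule.smul_mem_smul (key n r hr) trivial
    · intro a b ha hb
      rw [smul_add]; exact add_mem ha hb
  -- the target of the hypothesis splits as N ⊔ (x) • ⊤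
  have hset : {z : R | z ∈ ys ++ [x]} = {y : R | y ∈ ys} ∪ {x} := by
    ext z; simp [List.mem_append, or_comm]
  have hsup : limitClosure M (ys ++ [x]) = N ⊔ Ideal.span {x} • (⊤ : Submodule R M) := by
    rw [h, hset, Ideal.span_union, Submodule.sup_smul, hNdef, hIdef]
  -- L ≤ N ⊔ (x) • L
  have hLle : L ≤ N ⊔ Ideal.span {x} • L := by
    intro m hm
    obtain ⟨n, hn⟩ := (hmemL m).mp hm
    have hmem := hLlim hm
    rw [hsup] at hmem
    obtain ⟨u, hu, v, hv, huv⟩ := Submodule.mem_sup.mp hmem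
    have hv' : ∃ w : M, x • w = v := by
      refine Submodule.smul_induction_on hv ?_ ?_
      · intro r hr w _
        obtain ⟨c, rfl⟩ := Ideal.mem_span_singleton'.mp hr
        exact ⟨c • w, by rw [smul_smul, mul_comm]⟩
      · rintro a b ⟨w1, rfl⟩ ⟨w2, rfl⟩
        exact ⟨w1 + w2, by rw [smul_add]⟩
    obtain ⟨w, hw⟩ := hv'
    have hxw : x • w = m - u := by rw [hw, ← huv]; abel
    have hwL : w ∈ L := by
      refine (hmemL w).mpr ⟨n + 1, ?_⟩
      have : x ^ (n + 1) • w = x ^ n • (x • w) := by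
        rw [pow_succ, mul_smul]
      rw [this, hxw, smul_sub]
      exact Submodule.sub_mem _ hn (N.smul_mem _ hu)
    have hmrw : m = u + x • w := by rw [hxw]; abel
    rw [hmrw]
    exact Submodule.add_mem_sup hu
      (Submodule.smul_mem_smul (Ideal.mem_span_singleton_self x) hwL)
  -- pass to the quotient and apply Nakayama
  have hNoeth : IsNoetherian R M := isNoetherian_of_isNoetherianRing_of_finite R M
  set L' : Submodule R (M ⧸ N) := L.map N.mkQ with hL'def
  have hfg : L'.FG := IsNoetherian.noetherian L'
  have hmapN : N.map N.mkQ = ⊥ := by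
    rw [eq_bot_iff]
    exact Submodule.map_le_iff_le_comap.mpr
      (by rw [Submodule.comap_bot, Submodule.ker_mkQ])
  have hL'le : L' ≤ Ideal.span {x} • L' := by
    calc L.map N.mkQ ≤ (N ⊔ Ideal.span {x} • L).map N.mkQ := Submodule.map_mono hLle
      _ = N.map N.mkQ ⊔ (Ideal.span {x} • L).map N.mkQ := Submodule.map_sup _ _ _
      _ = ⊥ ⊔ Ideal.span {x} • L.map N.mkQ := by rw [hmapN, Submodule.map_smul'']
      _ = Ideal.span {x} • L' := by rw [bot_sup_eq]
  have hxjac : Ideal.span {x} ≤ Ideal.jacobson (⊥ : Ideal R) := by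
    rw [Ideal.span_le, Set.singleton_subset_iff]
    exact hjac x (by simp)
  have hnak : L' = ⊥ :=
    Submodule.eq_bot_of_le_smul_of_le_jacobson_bot (Ideal.span {x}) L' hfg hL'le hxjac
  -- hence L ≤ N
  have hLN : L ≤ N := by
    intro m hm
    have hm' : N.mkQ m ∈ L' := Submodule.mem_map_of_mem hm
    rw [hnak, Submodule.mem_bot] at hm'
    rwa [Submodule.mkQ_apply, Submodule.Quotient.mk_eq_zero] at hm'
  -- conclude regularity
  intro a b hab
  obtain ⟨a, rfl⟩ := N.mkQ_surjective a
  obtain ⟨b, rfl⟩ := N.mkQ_surjective b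
  have hsmul : N.mkQ (x • (a - b)) = 0 := by
    have hxab : x • N.mkQ a = x • N.mkQ b := hab
    rw [smul_sub, map_sub, map_smul, map_smul, hxab, sub_self]
  have hab' : a - b ∈ L := by
    refine (hmemL _).mpr ⟨1, ?_⟩
    rw [pow_one]
    rwa [Submodule.mkQ_apply, Submodule.Quotient.mk_eq_zero] at hsmul
  have hNab : a - b ∈ N := hLN hab'
  rw [Submodule.mkQ_apply, Submodule.mkQ_apply, Submodule.Quotient.eq]
  exact hNab
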